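/- Let f be a drift function with primitive G(x) = ∫₀ˣ (1/f)(y) dy and inverse H of G on G(ℝ) = (G(−∞), G(+∞)). Let b : ℝ → ℝ be measurable and set σ = (b/f) ∘ H on G(ℝ). Then for every open set U ⊆ G(ℝ), ∫_U σ(y)⁻² dy = ∫_{H(U)} b(y)⁻² f(y) dy. -/

import Mathlib

open MeasureTheory

/-- The primitive `G(x) = ∫₀ˣ (1/f)(y) dy` of the reciprocal of a drift
function `f` (with the convention `1/0 = ∞`). -/
noncomputable def primInv (f : ℝ → ℝ) (x : ℝ) : ℝ :=
  (∫⁻ y in Set.Ioc 0 x, (ENNReal.ofReal (f y))⁻¹ ∂volume).toReal -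
    (∫⁻ y in Set.Ioc x 0, (ENNReal.ofReal (f y))⁻¹ ∂volume).toReal

open Set

/-- A right-continuous function is measurable. -/
lemma meas_of_rc (f : ℝ → ℝ) (hrc : ∀ x, ContinuousWithinAt f (Set.Ici x) x) :
    Measurable f := by
  have hmeas : ∀ n : ℕ, Measurable (fun x : ℝ => f ((⌈x * (n+1)⌉ : ℤ) / (n+1))) := by
    intro n
    exact (measurable_of_countable (fun k : ℤ => f (k / (n+1)))).comp
      (Int.measurable_ceil.comp (measurable_id.mul_const _))
  apply measurable_of_tendsto_metrizable hmeas
  rw [tendsto_pi_nhds]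
  intro x
  set u : ℕ → ℝ := fun n => (⌈x * (n+1)⌉ : ℤ) / (n+1) with hu
  have hpos : ∀ n : ℕ, (0:ℝ) < (n:ℝ) + 1 := fun n => by positivity
  have hxle : ∀ n, x ≤ u n := by
    intro n
    rw [hu, le_div_iff₀ (hpos n)]
    exact Int.le_ceil _
  have hule : ∀ n, u n ≤ x + 1 / ((n:ℝ)+1) := by
    intro n
    rw [hu, div_le_iff₀ (hpos n)]
    have := (Int.ceil_lt_add_one (x * ((n:ℝ)+1))).le
    calc ((⌈x * ((n:ℝ)+1)⌉ : ℤ) : ℝ) ≤ x * ((n:ℝ)+1) + 1 := this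
      _ = (x + 1/((n:ℝ)+1)) * ((n:ℝ)+1) := by field_simp
  have hlim : Filter.Tendsto u Filter.atTop (nhds x) := by
    have h2 : Filter.Tendsto (fun n : ℕ => x + 1 / ((n:ℝ)+1)) Filter.atTop (nhds (x + 0)) :=
      (tendsto_const_nhds).add tendsto_one_div_add_atTop_nhds_zero_nat
    rw [add_zero] at h2
    exact tendsto_of_tendsto_of_tendsto_of_le_of_le tendsto_const_nhds h2 hxle hule
  have hlim' : Filter.Tendsto u Filter.atTop (nhdsWithin x (Set.Ici x)) :=
    tendsto_nhdsWithin_of_tendsto_nhds_of_eventually_within _ hlim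
      (Filter.Eventually.of_forall hxle)
  exact (hrc x).tendsto.comp hlim'

/-- The measure with density `1/f` with respect to Lebesgue measure. -/
noncomputable def nuM (f : ℝ → ℝ) : Measure ℝ :=
  volume.withDensity (fun x => (ENNReal.ofReal (f x))⁻¹)

section
variable {f : ℝ → ℝ}

lemma nuM_Icc_lt_top (hint : ∀ K : Set ℝ, IsCompact K →
      ∫⁻ x in K, (ENNReal.ofReal (f x))⁻¹ ∂volume < ⊤) (a b : ℝ) : nuM f (Icc a b) < ⊤ := by
  rw [nuM, withDensity_apply _ measurableSet_Icc]
  exact hint _ isCompact_Icc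

lemma nuM_Ioc_lt_top (hint : ∀ K : Set ℝ, IsCompact K →
      ∫⁻ x in K, (ENNReal.ofReal (f x))⁻¹ ∂volume < ⊤) (a b : ℝ) : nuM f (Ioc a b) < ⊤ :=
  lt_of_le_of_lt (measure_mono Ioc_subset_Icc_self) (nuM_Icc_lt_top hint a b)

lemma nuM_add {a b c : ℝ} (hab : a ≤ b) (hbc : b ≤ c) :
    nuM f (Ioc a c) = nuM f (Ioc a b) + nuM f (Ioc b c) := by
  rw [← Ioc_union_Ioc_eq_Ioc hab hbc,
    measure_union (Set.Ioc_disjoint_Ioc_of_le le_rfl) measurableSet_Ioc]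

lemma primInv_eq_nuM (x : ℝ) :
    primInv f x = (nuM f (Ioc 0 x)).toReal - (nuM f (Ioc x 0)).toReal := by
  rw [primInv, nuM, withDensity_apply _ measurableSet_Ioc,
    withDensity_apply _ measurableSet_Ioc]

variable (hint : ∀ K : Set ℝ, IsCompact K →
      ∫⁻ x in K, (ENNReal.ofReal (f x))⁻¹ ∂volume < ⊤)
include hint

lemma primInv_sub {a b : ℝ} (hab : a ≤ b) :
    primInv f b - primInv f a = (nuM f (Ioc a b)).toReal := by
  have fin : ∀ c d : ℝ, nuM f (Ioc c d) ≠ ⊤ := fun c d => (nuM_Ioc_lt_top hint c d).ne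
  rw [primInv_eq_nuM, primInv_eq_nuM]
  rcases le_total 0 a with h0a | ha0
  · have e1 : (nuM f (Ioc 0 b)).toReal
        = (nuM f (Ioc 0 a)).toReal + (nuM f (Ioc a b)).toReal := by
      rw [nuM_add h0a hab, ENNReal.toReal_add (fin _ _) (fin _ _)]
    have e2 : nuM f (Ioc a 0) = 0 := by rw [Ioc_eq_empty (by simpa using h0a), measure_empty]
    have e3 : nuM f (Ioc b 0) = 0 := by
      rw [Ioc_eq_empty (by simpa using (h0a.trans hab)), measure_empty]
    rw [e2, e3]; simp only [ENNReal.toReal_zero]; linarith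
  · rcases le_total b 0 with hb0 | h0b
    · have e1 : (nuM f (Ioc a 0)).toReal
          = (nuM f (Ioc a b)).toReal + (nuM f (Ioc b 0)).toReal := by
        rw [nuM_add hab hb0, ENNReal.toReal_add (fin _ _) (fin _ _)]
      have e2 : nuM f (Ioc 0 a) = 0 := by
        rw [Ioc_eq_empty (by simpa using (hab.trans hb0)), measure_empty]
      have e3 : nuM f (Ioc 0 b) = 0 := by rw [Ioc_eq_empty (by simpa using hb0), measure_empty]
      rw [e2, e3]; simp only [ENNReal.toReal_zero]; linarith
    · have e1 : (nuM f (Ioc a b)).toReal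
          = (nuM f (Ioc a 0)).toReal + (nuM f (Ioc 0 b)).toReal := by
        rw [nuM_add ha0 h0b, ENNReal.toReal_add (fin _ _) (fin _ _)]
      have e2 : nuM f (Ioc 0 a) = 0 := by rw [Ioc_eq_empty (by simpa using ha0), measure_empty]
      have e3 : nuM f (Ioc b 0) = 0 := by rw [Ioc_eq_empty (by simpa using h0b), measure_empty]
      rw [e2, e3]; simp only [ENNReal.toReal_zero]; linarith

lemma nuM_Ioc_eq {a b : ℝ} (hab : a ≤ b) :
    nuM f (Ioc a b) = ENNReal.ofReal (primInv f b - primInv f a) := by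
  rw [primInv_sub hint hab, ENNReal.ofReal_toReal (nuM_Ioc_lt_top hint a b).ne]

lemma primInv_mono : Monotone (primInv f) := by
  intro a b hab
  have := primInv_sub hint hab
  have h2 : 0 ≤ (nuM f (Ioc a b)).toReal := ENNReal.toReal_nonneg
  linarith

lemma primInv_continuous : Continuous (primInv f) := by
  rw [continuous_iff_continuousAt]
  intro x
  rw [Metric.continuousAt_iff]
  intro ε hε
  have hlim : Filter.Tendsto (fun n : ℕ => nuM f (Icc (x - 1/(n+1)) (x + 1/(n+1))))
      Filter.atTop (nhds (nuM f (⋂ n : ℕ, Icc (x - 1/(n+1)) (x + 1/(n+1))))) := by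
    apply tendsto_measure_iInter_atTop
    · exact fun n => measurableSet_Icc.nullMeasurableSet
    · intro n m hnm
      apply Icc_subset_Icc <;>
      · have h1 : (1:ℝ)/(m+1) ≤ 1/(n+1) := by
          apply one_div_le_one_div_of_le (by positivity)
          have : (n:ℝ) ≤ (m:ℝ) := Nat.cast_le.mpr hnm; linarith
        linarith
    · exact ⟨0, (nuM_Icc_lt_top hint _ _).ne⟩
  have hInter : (⋂ n : ℕ, Icc (x - 1/((n:ℝ)+1)) (x + 1/((n:ℝ)+1))) = {x} := by
    ext y
    simp only [mem_iInter, mem_Icc, mem_singleton_iff]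
    constructor
    · intro h
      have habs : ∀ n : ℕ, |y - x| ≤ 1/((n:ℝ)+1) := by
        intro n; rw [abs_le]; constructor <;> [linarith [(h n).1]; linarith [(h n).2]]
      have h0 : |y - x| ≤ 0 :=
        ge_of_tendsto' tendsto_one_div_add_atTop_nhds_zero_nat habs
      have := abs_nonneg (y - x)
      have : |y - x| = 0 := le_antisymm h0 this
      rw [abs_eq_zero] at this; linarith [this]
    · rintro rfl
      intro n; constructor <;> [linarith [one_div_pos.mpr (by positivity : (0:ℝ) < (n:ℝ)+1)];
        linarith [one_div_pos.mpr (by positivity : (0:ℝ) < (n:ℝ)+1)]]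
  have hx0 : nuM f ({x} : Set ℝ) = 0 := by
    rw [nuM, withDensity_apply _ (measurableSet_singleton x)]
    rw [setLIntegral_measure_zero _ _ (Real.volume_singleton)]
  rw [hInter, hx0] at hlim
  have hev : ∀ᶠ n : ℕ in Filter.atTop,
      nuM f (Icc (x - 1/(n+1)) (x + 1/(n+1))) < ENNReal.ofReal ε :=
    hlim.eventually (gt_mem_nhds (ENNReal.ofReal_pos.mpr hε))
  obtain ⟨n, hn⟩ := hev.exists
  refine ⟨1/((n:ℝ)+1), by positivity, fun y hy => ?_⟩
  rw [Real.dist_eq] at hy ⊢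
  have hsub : ∀ c d : ℝ, x - 1/((n:ℝ)+1) ≤ c → d ≤ x + 1/((n:ℝ)+1) →
      (nuM f (Ioc c d)).toReal < ε := by
    intro c d hc hd
    have hmono : nuM f (Ioc c d) ≤ nuM f (Icc (x - 1/(n+1)) (x + 1/(n+1))) :=
      measure_mono (fun z hz => ⟨hc.trans hz.1.le, hz.2.trans hd⟩)
    exact lt_of_le_of_lt (ENNReal.toReal_mono (nuM_Icc_lt_top hint _ _).ne hmono)
      (ENNReal.toReal_lt_of_lt_ofReal hn)
  have hposn : (0:ℝ) < 1/((n:ℝ)+1) := by positivity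
  rcases le_total x y with hxy | hyx
  · have habs : |y - x| < 1/((n:ℝ)+1) := hy
    rw [abs_lt] at habs
    have := hsub x y (by linarith) (by linarith)
    rw [abs_of_nonneg (by linarith [primInv_mono hint hxy] :
      (0:ℝ) ≤ primInv f y - primInv f x)]
    linarith [primInv_sub hint hxy]
  · have habs : |y - x| < 1/((n:ℝ)+1) := hy
    rw [abs_lt] at habs
    have := hsub y x (by linarith) (by linarith)
    rw [abs_of_nonpos (by linarith [primInv_mono hint hyx] :
      primInv f y - primInv f x ≤ 0)]
    linarith [primInv_sub hint hyx]

end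

lemma upward_open_eq_Ioi {P : Set ℝ} (hP : IsOpen P)
    (hup : ∀ ⦃x y : ℝ⦄, x ∈ P → x ≤ y → y ∈ P) (hne : P.Nonempty) {z : ℝ} (hz : z ∉ P) :
    P = Ioi (sInf P) := by
  have hbdd : BddBelow P := ⟨z, fun p hp => by
    by_contra h
    exact hz (hup hp (le_of_not_ge h))⟩
  ext y
  constructor
  · intro hy
    obtain ⟨ε, hε, hball⟩ := Metric.isOpen_iff.mp hP y hy
    have hmem : y - ε/2 ∈ P := hball (by
      rw [Metric.mem_ball, Real.dist_eq, abs_of_nonpos (by linarith)]; linarith)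
    have : sInf P ≤ y - ε/2 := csInf_le hbdd hmem
    simp only [mem_Ioi]; linarith
  · intro hy
    obtain ⟨p, hp, hplt⟩ := exists_lt_of_csInf_lt hne hy
    exact hup hp hplt.le

lemma downward_closed_eq_Iic {Q : Set ℝ} (hQ : IsClosed Q)
    (hdn : ∀ ⦃x y : ℝ⦄, x ∈ Q → y ≤ x → y ∈ Q) (hne : Q.Nonempty) {z : ℝ} (hz : z ∉ Q) :
    Q = Iic (sSup Q) := by
  have hbdd : BddAbove Q := ⟨z, fun p hp => by
    by_contra h
    exact hz (hdn hp (le_of_not_ge h))⟩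
  have hmem : sSup Q ∈ Q := hQ.csSup_mem hne hbdd
  ext y
  exact ⟨fun hy => le_csSup hbdd hy, fun hy => hdn hmem hy⟩

section
variable {f : ℝ → ℝ}
  (hint : ∀ K : Set ℝ, IsCompact K →
      ∫⁻ x in K, (ENNReal.ofReal (f x))⁻¹ ∂volume < ⊤)
  (hsm : StrictMono (primInv f))
include hint hsm

lemma vol_image_Ioc (α β : ℝ) :
    volume (primInv f '' Ioc α β) = nuM f (Ioc α β) := by
  rcases le_or_gt α β with h | h
  · have himg : primInv f '' Ioc α β = Ioc (primInv f α) (primInv f β) := by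
      apply Subset.antisymm
      · rintro _ ⟨x, hx, rfl⟩
        exact ⟨hsm hx.1, hsm.monotone hx.2⟩
      · exact intermediate_value_Ioc h (primInv_continuous hint).continuousOn
    rw [himg, Real.volume_Ioc, nuM_Ioc_eq hint h]
  · rw [Ioc_eq_empty (not_lt.mpr h.le), image_empty, measure_empty, measure_empty]

lemma map_nuM :
    Measure.map (primInv f) (nuM f) = volume.restrict (range (primInv f)) := by
  have hGm : Measurable (primInv f) := (primInv_continuous hint).measurable
  refine (Measure.ext_of_Ioc' (volume.restrict (range (primInv f)))
    (Measure.map (primInv f) (nuM f)) (fun a b _ => ?_) (fun a b _ => ?_)).symm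
  · rw [Measure.restrict_apply measurableSet_Ioc]
    exact ((measure_mono inter_subset_left).trans_lt measure_Ioc_lt_top).ne
  · rw [Measure.restrict_apply measurableSet_Ioc,
      Measure.map_apply hGm measurableSet_Ioc]
    set G := primInv f
    set E : Set ℝ := G ⁻¹' Ioc a b with hE
    have hGE : G '' E = Ioc a b ∩ range G := image_preimage_eq_inter_range
    rw [← hGE]
    symm
    set En : ℕ → Set ℝ := fun n => E ∩ Ioc (-(n:ℝ)-1) ((n:ℝ)+1) with hEn
    have hmono : Monotone En := by
      intro n m hnm
      apply inter_subset_inter_right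
      have : (n:ℝ) ≤ (m:ℝ) := Nat.cast_le.mpr hnm
      apply Ioc_subset_Ioc <;> linarith
    have hUnion : (⋃ n, En n) = E := by
      apply Subset.antisymm (iUnion_subset fun n => inter_subset_left)
      intro x hx
      obtain ⟨n, hn⟩ := exists_nat_ge |x|
      have := abs_le.mp hn
      exact mem_iUnion.mpr ⟨n, hx, by constructor <;> [linarith [this.1]; linarith [this.2]]⟩
    have hcore : ∀ n, nuM f (En n) = volume (G '' En n) := by
      intro n
      set P : Set ℝ := {x | a < G x} ∩ Ioi (-(n:ℝ)-1) with hP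
      set Q : Set ℝ := {x | G x ≤ b} ∩ Iic ((n:ℝ)+1) with hQ
      have hEnPQ : En n = P ∩ Q := by
        rw [hEn, hP, hQ]
        ext x
        simp only [mem_inter_iff, mem_preimage, mem_Ioc, mem_Ioi, mem_Iic, mem_setOf_eq, hE]
        tauto
      rcases P.eq_empty_or_nonempty with hPe | hPne
      · rw [hEnPQ, hPe, empty_inter, image_empty, measure_empty, measure_empty]
      rcases Q.eq_empty_or_nonempty with hQe | hQne
      · rw [hEnPQ, hQe, inter_empty, image_empty, measure_empty, measure_empty]
      have hPopen : IsOpen P :=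
        ((isOpen_Ioi.preimage (primInv_continuous hint)).inter isOpen_Ioi)
      have hPup : ∀ ⦃x y : ℝ⦄, x ∈ P → x ≤ y → y ∈ P := by
        rintro x y ⟨hx1, hx2⟩ hxy
        exact ⟨lt_of_lt_of_le hx1 (hsm.monotone hxy), lt_of_lt_of_le hx2 hxy⟩
      have hPz : (-(n:ℝ)-1) ∉ P := fun h => lt_irrefl _ (mem_Ioi.mp h.2)
      have hQclosed : IsClosed Q :=
        ((isClosed_Iic.preimage (primInv_continuous hint)).inter isClosed_Iic)
      have hQdn : ∀ ⦃x y : ℝ⦄, x ∈ Q → y ≤ x → y ∈ Q := by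
        rintro x y ⟨hx1, hx2⟩ hyx
        exact ⟨le_trans (hsm.monotone hyx) hx1, le_trans hyx hx2⟩
      have hQz : ((n:ℝ)+1+1) ∉ Q := fun h => by
        have := h.2; rw [mem_Iic] at this; linarith
      rw [hEnPQ, upward_open_eq_Ioi hPopen hPup hPne hPz,
        downward_closed_eq_Iic hQclosed hQdn hQne hQz, Ioi_inter_Iic,
        vol_image_Ioc hint hsm]
    calc nuM f E = nuM f (⋃ n, En n) := by rw [hUnion]
      _ = ⨆ n, nuM f (En n) := hmono.measure_iUnion
      _ = ⨆ n, volume (G '' En n) := by simp_rw [hcore]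
      _ = volume (⋃ n, G '' En n) :=
        (Monotone.measure_iUnion (fun n m h => image_mono (hmono h))).symm
      _ = volume (G '' ⋃ n, En n) := by rw [image_iUnion]
      _ = volume (G '' E) := by rw [hUnion]

end

/-- With `σ = (b/f) ∘ H`, where `H` is the inverse of `G = primInv f` on
`G(ℝ)`, for every open `U ⊆ G(ℝ)` one has
`∫_U σ(y)⁻² dy = ∫_{H(U)} b(y)⁻² f(y) dy`.  Here `σ(y)⁻²` is interpreted
as `f(H(y))² / b(H(y))²` and `b⁻² f` as `f/b²` in `[0,∞]`, with the paper's
conventions `1/0 = ∞`, `0·∞ = 0`. -/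
theorem lintegral_sigma_inv_sq_eq
    (f : ℝ → ℝ) (hnn : ∀ x, 0 ≤ f x)
    (hrc : ∀ x, ContinuousWithinAt f (Set.Ici x) x)
    (hbv : LocallyBoundedVariationOn f Set.univ)
    (hint : ∀ K : Set ℝ, IsCompact K →
      ∫⁻ x in K, (ENNReal.ofReal (f x))⁻¹ ∂volume < ⊤)
    (b : ℝ → ℝ) (hb : Measurable b)
    (H : ℝ → ℝ) (hH : ∀ t, H (primInv f t) = t) :
    ∀ U : Set ℝ, IsOpen U → U ⊆ Set.range (primInv f) →
      ∫⁻ y in U,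
          (ENNReal.ofReal (b (H y) ^ 2))⁻¹ * ENNReal.ofReal (f (H y) ^ 2) ∂volume
        = ∫⁻ y in H '' U,
            (ENNReal.ofReal (b y ^ 2))⁻¹ * ENNReal.ofReal (f y) ∂volume := by
  intro U hU hUr
  have hfm : Measurable f := meas_of_rc f hrc
  have hcont : Continuous (primInv f) := primInv_continuous hint
  have hinj : Function.Injective (primInv f) := Function.LeftInverse.injective hH
  have hsm : StrictMono (primInv f) := (primInv_mono hint).strictMono_of_injective hinj
  have hGm : Measurable (primInv f) := hcont.measurable
  have hemb : MeasurableEmbedding (primInv f) := hcont.measurableEmbedding hinj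
  have hUm : MeasurableSet U := hU.measurableSet
  have hpre : primInv f ⁻¹' U = H '' U := by
    apply Set.Subset.antisymm
    · intro x hx
      exact ⟨primInv f x, hx, hH x⟩
    · rintro _ ⟨y, hy, rfl⟩
      obtain ⟨t, rfl⟩ := hUr hy
      rw [Set.mem_preimage, hH]
      exact hy
  have hEm : MeasurableSet (primInv f ⁻¹' U) := hGm hUm
  have hrestr : volume.restrict U
      = Measure.map (primInv f) ((nuM f).restrict (primInv f ⁻¹' U)) := by
    rw [← Measure.restrict_map hGm hUm, map_nuM hint hsm,
      Measure.restrict_restrict hUm, Set.inter_eq_left.mpr hUr]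
  calc ∫⁻ y in U,
          (ENNReal.ofReal (b (H y) ^ 2))⁻¹ * ENNReal.ofReal (f (H y) ^ 2) ∂volume
      = ∫⁻ y, (ENNReal.ofReal (b (H y) ^ 2))⁻¹ * ENNReal.ofReal (f (H y) ^ 2)
          ∂(Measure.map (primInv f) ((nuM f).restrict (primInv f ⁻¹' U))) := by
        rw [← hrestr]
    _ = ∫⁻ x, (ENNReal.ofReal (b (H (primInv f x)) ^ 2))⁻¹
          * ENNReal.ofReal (f (H (primInv f x)) ^ 2)
          ∂((nuM f).restrict (primInv f ⁻¹' U)) := hemb.lintegral_map _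
    _ = ∫⁻ x, (ENNReal.ofReal (b x ^ 2))⁻¹ * ENNReal.ofReal (f x ^ 2)
          ∂((nuM f).restrict (primInv f ⁻¹' U)) := by
        apply lintegral_congr
        intro x
        rw [hH]
    _ = ∫⁻ x in primInv f ⁻¹' U, (ENNReal.ofReal (f x))⁻¹
          * ((ENNReal.ofReal (b x ^ 2))⁻¹ * ENNReal.ofReal (f x ^ 2)) ∂volume := by
        rw [nuM, restrict_withDensity hEm,
          lintegral_withDensity_eq_lintegral_mul _ (f := fun x => (ENNReal.ofReal (f x))⁻¹) (hfm.ennreal_ofReal.inv)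
            (g := fun x => (ENNReal.ofReal (b x ^ 2))⁻¹ * ENNReal.ofReal (f x ^ 2))
            (((hb.pow_const 2).ennreal_ofReal.inv).mul ((hfm.pow_const 2).ennreal_ofReal))]
        simp only [Pi.mul_apply]
    _ = ∫⁻ x in H '' U, (ENNReal.ofReal (b x ^ 2))⁻¹ * ENNReal.ofReal (f x) ∂volume := by
        rw [hpre]
        apply lintegral_congr
        intro x
        rcases eq_or_lt_of_le (hnn x) with h0 | hpos
        · rw [← h0]
          simp
        · have h1 : ENNReal.ofReal (f x ^ 2) = ENNReal.ofReal (f x) * ENNReal.ofReal (f x) := by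
            rw [sq, ENNReal.ofReal_mul (hnn x)]
          rw [h1, mul_left_comm,
            ← mul_assoc ((ENNReal.ofReal (f x))⁻¹),
            ENNReal.inv_mul_cancel (ENNReal.ofReal_pos.mpr hpos).ne' ENNReal.ofReal_ne_top,
            one_mul]
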